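/- (Singularity criterion of type B, k = n; the key step of the main theorem for B_n/P(α_n).) Let n ≥ 2 and let a_1,…,a_n be nonnegative integers. Then for every integer t, there exists a positive root α ∈ Φ⁺_B with ⟨w(t), α⟩ = 0 if and only if t belongs to the step-matrix entry set S^B_{n,a}. -/
import Mathlib

open Finset

/-- The positive roots of type `Bₙ`: `eₚ+e_q`, `eₚ-e_q` (`p<q`) and `eₚ`. -/
def PhiB (n : ℕ) : Set (Fin n → ℝ) :=
  {α | ∃ p q : Fin n, p < q ∧
      α = fun i => (if i = p then (1:ℝ) else 0) + (if i = q then 1 else 0)} ∪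
  {α | ∃ p q : Fin n, p < q ∧
      α = fun i => (if i = p then (1:ℝ) else 0) - (if i = q then 1 else 0)} ∪
  {α | ∃ p : Fin n, α = fun i => if i = p then (1:ℝ) else 0}

/-- Standard inner product on `ℝⁿ`. -/
noncomputable def ip (n : ℕ) (v w : Fin n → ℝ) : ℝ := ∑ i, v i * w i

/-- The coordinate form of the weight `λ+ρ-tλ_n` for type `Bₙ`
(coordinates are indexed one-based). -/
noncomputable def wBn (n : ℕ) (a : ℕ → ℤ) (t : ℤ) : Fin n → ℝ := fun i =>
  (∑ u ∈ Icc (i.val + 1) (n - 1), (a u : ℝ)) + ((a n : ℝ) + 1) / 2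
    + ((n : ℝ) - (i.val + 1)) - (t : ℝ) / 2

/-- The step-matrix entry set `S^B_{n,a}` (the case `k = n`). -/
def SBn (n : ℕ) (a : ℕ → ℤ) : Set ℚ :=
  {x | ∃ i j : ℕ, 1 ≤ i ∧ i ≤ j ∧ j ≤ n ∧
    x = (∑ u ∈ Icc (n + 1 - i) (n - 1), (a u : ℚ))
      + (∑ u ∈ Icc (n + 1 - j) (n - 1), (a u : ℚ)) + (a n : ℚ) + i + j - 1}

lemma ip_pair {n : ℕ} (w : Fin n → ℝ) (p q : Fin n) :
    ip n w (fun i => (if i = p then (1:ℝ) else 0) + (if i = q then 1 else 0))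
      = w p + w q := by
  simp [ip, mul_add, mul_ite, Finset.sum_add_distrib]

lemma ip_diff {n : ℕ} (w : Fin n → ℝ) (p q : Fin n) :
    ip n w (fun i => (if i = p then (1:ℝ) else 0) - (if i = q then 1 else 0))
      = w p - w q := by
  simp [ip, mul_sub, mul_ite, Finset.sum_sub_distrib]

lemma ip_single {n : ℕ} (w : Fin n → ℝ) (p : Fin n) :
    ip n w (fun i => if i = p then (1:ℝ) else 0) = w p := by
  simp [ip, mul_ite]

/-- Singularity criterion of type `B`, `k = n`: `λ+ρ-tλ_n` is singular iff `t` is an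
entry of the step matrix `T^B_{n,λ}`. -/
theorem singular_criterion_B_eq (n : ℕ) (hn : 2 ≤ n)
    (a : ℕ → ℤ) (ha : ∀ u, 1 ≤ u → u ≤ n → 0 ≤ a u) (t : ℤ) :
    (∃ α ∈ PhiB n, ip n (wBn n a t) α = 0) ↔ (t : ℚ) ∈ SBn n a := by
  constructor
  · rintro ⟨α, hα, hip⟩
    simp only [PhiB, Set.mem_union, Set.mem_setOf_eq] at hα
    rcases hα with (⟨p, q, hpq, rfl⟩ | ⟨p, q, hpq, rfl⟩) | ⟨p, rfl⟩
    · -- long root e_p + e_q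
      rw [ip_pair] at hip
      simp only [wBn] at hip
      have hq : q.val < n := q.isLt
      have hp : p.val < n := p.isLt
      have hpq' : p.val < q.val := hpq
      have htr : (t : ℝ) = (∑ u ∈ Icc (q.val + 1) (n-1), (a u : ℝ))
          + (∑ u ∈ Icc (p.val + 1) (n-1), (a u : ℝ)) + (a n : ℝ)
          + (2*n - p.val - q.val - 2) - 1 + 2 := by linarith
      have htz : t = (∑ u ∈ Icc (q.val + 1) (n-1), a u)
          + (∑ u ∈ Icc (p.val + 1) (n-1), a u) + a n
          + (2*(n:ℤ) - p.val - q.val - 2) - 1 + 2 := by exact_mod_cast htr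
      refine ⟨n - q.val, n - p.val, by omega, by omega, by omega, ?_⟩
      rw [show n + 1 - (n - q.val) = q.val + 1 by omega,
          show n + 1 - (n - p.val) = p.val + 1 by omega]
      have htq : (t : ℚ) = (∑ u ∈ Icc (q.val + 1) (n-1), (a u : ℚ))
          + (∑ u ∈ Icc (p.val + 1) (n-1), (a u : ℚ)) + (a n : ℚ)
          + (2*(n:ℚ) - p.val - q.val - 2) - 1 + 2 := by exact_mod_cast htz
      rw [htq]
      push_cast [Nat.cast_sub hq.le, Nat.cast_sub hp.le]
      ring
    · -- difference root: impossible
      exfalso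
      rw [ip_diff] at hip
      simp only [wBn] at hip
      have hpq' : p.val < q.val := hpq
      have hsum : ∑ u ∈ Icc (q.val + 1) (n-1), (a u : ℝ)
          ≤ ∑ u ∈ Icc (p.val + 1) (n-1), (a u : ℝ) := by
        apply Finset.sum_le_sum_of_subset_of_nonneg
          (Finset.Icc_subset_Icc (by omega) le_rfl)
        intro u hu _
        rw [Finset.mem_Icc] at hu
        have := ha u (by omega) (by omega)
        exact_mod_cast this
      have hq : ((p.val : ℝ)) < q.val := by exact_mod_cast hpq'
      linarith
    · -- short root e_p
      rw [ip_single] at hip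
      simp only [wBn] at hip
      have hp : p.val < n := p.isLt
      have htr : (t : ℝ) = (∑ u ∈ Icc (p.val + 1) (n-1), (a u : ℝ))
          + (∑ u ∈ Icc (p.val + 1) (n-1), (a u : ℝ)) + (a n : ℝ)
          + (2*n - 2*p.val - 2) - 1 + 2 := by linarith
      have htz : t = (∑ u ∈ Icc (p.val + 1) (n-1), a u)
          + (∑ u ∈ Icc (p.val + 1) (n-1), a u) + a n
          + (2*(n:ℤ) - 2*p.val - 2) - 1 + 2 := by exact_mod_cast htr
      refine ⟨n - p.val, n - p.val, by omega, le_rfl, by omega, ?_⟩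
      rw [show n + 1 - (n - p.val) = p.val + 1 by omega]
      have htq : (t : ℚ) = (∑ u ∈ Icc (p.val + 1) (n-1), (a u : ℚ))
          + (∑ u ∈ Icc (p.val + 1) (n-1), (a u : ℚ)) + (a n : ℚ)
          + (2*(n:ℚ) - 2*p.val - 2) - 1 + 2 := by exact_mod_cast htz
      rw [htq]
      push_cast [Nat.cast_sub hp.le]
      ring
  · rintro ⟨i, j, hi, hij, hjn, hx⟩
    rcases eq_or_lt_of_le hij with rfl | hlt
    · -- short root, p.val = n - i
      refine ⟨_, Or.inr ⟨⟨n - i, by omega⟩, rfl⟩, ?_⟩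
      rw [ip_single]
      simp only [wBn]
      rw [show n - i + 1 = n + 1 - i by omega] at *
      have htz : t = (∑ u ∈ Icc (n + 1 - i) (n-1), a u)
          + (∑ u ∈ Icc (n + 1 - i) (n-1), a u) + a n + i + i - 1 := by
        exact_mod_cast hx
      have htr : (t : ℝ) = (∑ u ∈ Icc (n + 1 - i) (n-1), (a u : ℝ))
          + (∑ u ∈ Icc (n + 1 - i) (n-1), (a u : ℝ)) + (a n : ℝ) + i + i - 1 := by
        exact_mod_cast htz
      have hni : ((n - i : ℕ) : ℝ) = (n : ℝ) - i := by
        push_cast [Nat.cast_sub (by omega : i ≤ n)]; ring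
      rw [hni]
      linarith
    · -- long root, p.val = n - j, q.val = n - i
      refine ⟨_, Or.inl (Or.inl ⟨⟨n - j, by omega⟩, ⟨n - i, by omega⟩,
        by simp [Fin.lt_def]; omega, rfl⟩), ?_⟩
      rw [ip_pair]
      simp only [wBn]
      rw [show n - j + 1 = n + 1 - j by omega, show n - i + 1 = n + 1 - i by omega]
      have htz : t = (∑ u ∈ Icc (n + 1 - i) (n-1), a u)
          + (∑ u ∈ Icc (n + 1 - j) (n-1), a u) + a n + i + j - 1 := by
        exact_mod_cast hx
      have htr : (t : ℝ) = (∑ u ∈ Icc (n + 1 - i) (n-1), (a u : ℝ))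
          + (∑ u ∈ Icc (n + 1 - j) (n-1), (a u : ℝ)) + (a n : ℝ) + i + j - 1 := by
        exact_mod_cast htz
      have hnj : ((n - j : ℕ) : ℝ) = (n : ℝ) - j := by
        push_cast [Nat.cast_sub (by omega : j ≤ n)]; ring
      have hni : ((n - i : ℕ) : ℝ) = (n : ℝ) - i := by
        push_cast [Nat.cast_sub (by omega : i ≤ n)]; ring
      rw [hnj, hni]
      linarith
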